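/- Monotonicity of average cost along exact natural gradient: if K is stabilizing, γ (‖R‖ + σ_min(Ψ)^{-1} ‖B‖² J(K)) ≤ 1, and K' = K − γ E_K, then J(K') − J(K) ≤ −γ σ_min(Ψ) tr(E_K^T E_K) ≤ 0; in particular J(K') ≤ J(K). -/

import Mathlib

open Matrix
open scoped ENNReal NNReal

/-- Spectral radius of a real square matrix. -/
noncomputable def specRad {n : Type*} [Fintype n] [DecidableEq n]
    (M : Matrix n n ℝ) : ℝ≥0∞ :=
  ⨆ z ∈ spectrum ℂ (M.map (Complex.ofReal : ℝ → ℂ)), (‖z‖₊ : ℝ≥0∞)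

/-- The ℓ₂ → ℓ₂ operator norm of a real matrix. -/
noncomputable def opNorm {m n : Type*} [Fintype m] [Fintype n] [DecidableEq n]
    (M : Matrix m n ℝ) : ℝ :=
  ‖LinearMap.toContinuousLinearMap (Matrix.toEuclideanLin (𝕜 := ℝ) M)‖

/-- The minimal eigenvalue of a real matrix, as the infimum of its real spectrum. -/
noncomputable def minEig {n : Type*} [Fintype n] [DecidableEq n]
    (M : Matrix n n ℝ) : ℝ :=
  sInf (spectrum ℝ M)

section Auxiliary

set_option linter.unusedSectionVars false
set_option maxHeartbeats 1000000

open Filter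

namespace LQRAux

variable {m n : Type*} [Fintype m] [Fintype n] [DecidableEq n]

lemma ctr (A : Matrix m n ℝ) : Aᴴ = Aᵀ := by
  ext i j; simp [Matrix.conjTranspose_apply]

lemma dot_self_nonneg (x : n → ℝ) : 0 ≤ x ⬝ᵥ x :=
  Finset.sum_nonneg fun _ _ => mul_self_nonneg _

lemma trace_transpose_mul_self_nonneg (X : Matrix m n ℝ) : 0 ≤ (Xᵀ * X).trace := by
  simp only [Matrix.trace, Matrix.diag, Matrix.mul_apply, Matrix.transpose_apply]
  apply Finset.sum_nonneg; intro i _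
  apply Finset.sum_nonneg; intro j _
  exact mul_self_nonneg _

lemma psd_eq_ct_mul_self {A : Matrix n n ℝ} (hA : A.PosSemidef) :
    ∃ C : Matrix n n ℝ, A = Cᴴ * C := by
  set U : Matrix n n ℝ := (hA.1.eigenvectorUnitary : Matrix n n ℝ)
  refine ⟨diagonal (fun i => Real.sqrt (hA.1.eigenvalues i)) * star U, ?_⟩
  have hd : diagonal (RCLike.ofReal ∘ hA.1.eigenvalues : n → ℝ)
      = (diagonal fun i => Real.sqrt (hA.1.eigenvalues i))ᴴ
        * diagonal fun i => Real.sqrt (hA.1.eigenvalues i) := by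
    rw [diagonal_conjTranspose, diagonal_mul_diagonal]
    congr 1; ext i
    simp [Real.mul_self_sqrt (hA.eigenvalues_nonneg i)]
  conv_lhs => rw [hA.1.spectral_theorem]
  rw [Unitary.conjStarAlgAut_apply, hd]
  simp only [U, star_eq_conjTranspose, conjTranspose_mul, conjTranspose_conjTranspose,
    Matrix.mul_assoc]

lemma psd_trace_nonneg {A : Matrix n n ℝ} (hA : A.PosSemidef) : 0 ≤ A.trace := by
  obtain ⟨C, rfl⟩ := psd_eq_ct_mul_self hA
  rw [ctr]
  exact trace_transpose_mul_self_nonneg C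

lemma trace_mul_psd_nonneg {A B : Matrix n n ℝ} (hA : A.PosSemidef) (hB : B.PosSemidef) :
    0 ≤ (A * B).trace := by
  obtain ⟨C, rfl⟩ := psd_eq_ct_mul_self hA
  obtain ⟨D, rfl⟩ := psd_eq_ct_mul_self hB
  rw [ctr, ctr]
  have h1 : Cᵀ * C * (Dᵀ * D) = Cᵀ * (C * Dᵀ * D) := by noncomm_ring
  rw [h1, trace_mul_comm]
  have h2 : C * Dᵀ * D * Cᵀ = (D * Cᵀ)ᵀ * (D * Cᵀ) := by
    rw [transpose_mul, transpose_transpose]; noncomm_ring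
  rw [h2]
  exact trace_transpose_mul_self_nonneg _

/-- trace lower bound: if `X` PSD and `S - c • 1` PSD then `c * tr X ≤ tr (X * S)`. -/
lemma trace_mul_ge {X S : Matrix n n ℝ} {c : ℝ} (hX : X.PosSemidef)
    (hS : (S - c • 1).PosSemidef) : c * X.trace ≤ (X * S).trace := by
  have h := trace_mul_psd_nonneg hX hS
  rw [Matrix.mul_sub, trace_sub, Matrix.mul_smul, Matrix.mul_one, trace_smul] at h
  simpa [smul_eq_mul] using h

lemma minEig_le_eig {Ψ : Matrix n n ℝ} (h : Ψ.IsHermitian) (i : n) :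
    minEig Ψ ≤ h.eigenvalues i := by
  rw [minEig, h.spectrum_real_eq_range_eigenvalues]
  exact csInf_le (Set.Finite.bddBelow (Set.finite_range _)) ⟨i, rfl⟩

lemma minEig_pos [Nonempty n] {Ψ : Matrix n n ℝ} (h : Ψ.PosDef) : 0 < minEig Ψ := by
  rw [minEig, h.1.spectrum_real_eq_range_eigenvalues]
  obtain ⟨i, hi⟩ := (Set.range_nonempty h.1.eigenvalues).csInf_mem
    (Set.finite_range _)
  rw [← hi]
  exact h.eigenvalues_pos i

lemma unit_mul_transpose {U : Matrix n n ℝ} (hU : U ∈ unitaryGroup n ℝ) : U * Uᵀ = 1 := by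
  have := mem_unitaryGroup_iff.mp hU
  rwa [star_eq_conjTranspose, ctr] at this

lemma transpose_mul_unit {U : Matrix n n ℝ} (hU : U ∈ unitaryGroup n ℝ) : Uᵀ * U = 1 := by
  have := mem_unitaryGroup_iff'.mp hU
  rwa [star_eq_conjTranspose, ctr] at this

lemma spectral_real {Ψ : Matrix n n ℝ} (h : Ψ.IsHermitian) :
    Ψ = h.eigenvectorUnitary * diagonal h.eigenvalues * (h.eigenvectorUnitary : Matrix n n ℝ)ᵀ := by
  have h2 : (RCLike.ofReal ∘ h.eigenvalues : n → ℝ) = h.eigenvalues := by ext x; simp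
  conv_lhs => rw [h.spectral_theorem]
  rw [h2, Unitary.conjStarAlgAut_apply, star_eq_conjTranspose, ctr]

lemma psd_sub_minEig_smul [Nonempty n] {Ψ : Matrix n n ℝ} (h : Ψ.PosDef) :
    (Ψ - minEig Ψ • 1).PosSemidef := by
  set c := minEig Ψ
  set U := (h.1.eigenvectorUnitary : Matrix n n ℝ)
  have hU : U ∈ unitaryGroup n ℝ := h.1.eigenvectorUnitary.2
  have key : Ψ - c • 1 = U * diagonal (fun i => h.1.eigenvalues i - c) * Uᵀ := by
    have h1 : (c • (1 : Matrix n n ℝ)) = U * (c • (1 : Matrix n n ℝ)) * Uᵀ := by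
      rw [Matrix.mul_smul, Matrix.mul_one, Matrix.smul_mul, unit_mul_transpose hU]
    conv_lhs => rw [spectral_real h.1, h1]
    rw [← Matrix.sub_mul, ← Matrix.mul_sub]
    congr 2
    rw [smul_one_eq_diagonal, diagonal_sub]
  rw [key, ← ctr U]
  exact (posSemidef_diagonal_iff.mpr fun i =>
    sub_nonneg.mpr (minEig_le_eig h.1 i)).mul_mul_conjTranspose_same U

lemma quad_le_trace {P : Matrix n n ℝ} (hP : P.PosSemidef) (x : n → ℝ) :
    x ⬝ᵥ (P *ᵥ x) ≤ P.trace * (x ⬝ᵥ x) := by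
  set U := (hP.1.eigenvectorUnitary : Matrix n n ℝ)
  have hU : U ∈ unitaryGroup n ℝ := hP.1.eigenvectorUnitary.2
  set ev := hP.1.eigenvalues
  set y := Uᵀ *ᵥ x with hy
  have hxU : x ᵥ* U = y := by rw [hy, ← vecMul_transpose, transpose_transpose]
  have hquad : x ⬝ᵥ (P *ᵥ x) = ∑ i, ev i * (y i * y i) := by
    conv_lhs => rw [spectral_real hP.1]
    rw [← mulVec_mulVec, ← mulVec_mulVec, dotProduct_mulVec, hxU]
    simp only [dotProduct, mulVec_diagonal, ← hy]
    exact Finset.sum_congr rfl fun i _ => by ring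
  have hxx : x ⬝ᵥ x = y ⬝ᵥ y := by
    rw [hy, dotProduct_comm, dotProduct_mulVec, vecMul_transpose, mulVec_mulVec,
      unit_mul_transpose hU, one_mulVec]
  have htr : P.trace = ∑ i, ev i := by
    conv_lhs => rw [spectral_real hP.1]
    rw [trace_mul_cycle, transpose_mul_unit hU, Matrix.one_mul, trace_diagonal]
  rw [hquad, hxx, htr, Finset.sum_mul]
  apply Finset.sum_le_sum
  intro i _
  have h1 : 0 ≤ ev i := hP.eigenvalues_nonneg i
  have h2 : y i * y i ≤ y ⬝ᵥ y :=
    Finset.single_le_sum (fun j _ => mul_self_nonneg (y j)) (Finset.mem_univ i)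
  exact mul_le_mul_of_nonneg_left h2 h1

lemma inner_dot {N : Type*} [Fintype N] (x y : N → ℝ) :
    (inner ℝ ((WithLp.equiv 2 (N → ℝ)).symm x) ((WithLp.equiv 2 (N → ℝ)).symm y) : ℝ) = x ⬝ᵥ y := by
  simp [PiLp.inner_apply, dotProduct, WithLp.equiv_symm_apply, mul_comm]

lemma norm_mulVec_le (B : Matrix m n ℝ) (x : n → ℝ) :
    (B *ᵥ x) ⬝ᵥ (B *ᵥ x) ≤ opNorm B ^ 2 * (x ⬝ᵥ x) := by
  set x' : EuclideanSpace ℝ n := (WithLp.equiv 2 (n → ℝ)).symm x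
  have h1 : ‖(LinearMap.toContinuousLinearMap (Matrix.toEuclideanLin (𝕜 := ℝ) B)) x'‖
      ≤ opNorm B * ‖x'‖ := ContinuousLinearMap.le_opNorm _ _
  have h2 : (LinearMap.toContinuousLinearMap (Matrix.toEuclideanLin (𝕜 := ℝ) B)) x'
      = (WithLp.equiv 2 (m → ℝ)).symm (B *ᵥ x) := by
    show Matrix.toEuclideanLin (𝕜 := ℝ) B x' = _
    rw [Matrix.toEuclideanLin_apply]
    congr 1
  have h3 : (B *ᵥ x) ⬝ᵥ (B *ᵥ x)
      = ‖(WithLp.equiv 2 (m → ℝ)).symm (B *ᵥ x)‖ ^ 2 := by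
    rw [← inner_dot, real_inner_self_eq_norm_sq]
  have h4 : x ⬝ᵥ x = ‖x'‖ ^ 2 := by rw [← inner_dot, real_inner_self_eq_norm_sq]
  rw [h3, h4, ← h2]
  calc ‖_‖ ^ 2 ≤ (opNorm B * ‖x'‖) ^ 2 := by
        apply pow_le_pow_left₀ (norm_nonneg _) h1
    _ = opNorm B ^ 2 * ‖x'‖ ^ 2 := by ring

lemma quad_le_opNorm (R : Matrix n n ℝ) (x : n → ℝ) :
    x ⬝ᵥ (R *ᵥ x) ≤ opNorm R * (x ⬝ᵥ x) := by
  set x' : EuclideanSpace ℝ n := (WithLp.equiv 2 (n → ℝ)).symm x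
  have h2 : (LinearMap.toContinuousLinearMap (Matrix.toEuclideanLin (𝕜 := ℝ) R)) x'
      = (WithLp.equiv 2 (n → ℝ)).symm (R *ᵥ x) := by
    show Matrix.toEuclideanLin (𝕜 := ℝ) R x' = _
    rw [Matrix.toEuclideanLin_apply]
    congr 1
  have h1 : x ⬝ᵥ (R *ᵥ x) = (inner ℝ x' ((WithLp.equiv 2 (n → ℝ)).symm (R *ᵥ x)) : ℝ) :=
    (inner_dot x (R *ᵥ x)).symm
  rw [h1, ← h2]
  calc (inner ℝ x' (_) : ℝ) ≤ ‖x'‖ * ‖(LinearMap.toContinuousLinearMap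
        (Matrix.toEuclideanLin (𝕜 := ℝ) R)) x'‖ := real_inner_le_norm _ _
    _ ≤ ‖x'‖ * (opNorm R * ‖x'‖) := by
        apply mul_le_mul_of_nonneg_left (ContinuousLinearMap.le_opNorm _ _) (norm_nonneg _)
    _ = opNorm R * (x ⬝ᵥ x) := by
        have h4 : x ⬝ᵥ x = ‖x'‖ ^ 2 := by rw [← inner_dot, real_inner_self_eq_norm_sq]
        rw [h4]; ring

lemma pow_entry_bound {L : Matrix n n ℝ}
    (h : specRad L < 1) :
    ∃ c ρ : ℝ, 0 ≤ c ∧ 0 < ρ ∧ ρ < 1 ∧ ∀ (t : ℕ) (i j : n), |(L ^ t) i j| ≤ c * ρ ^ t := by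
  letI : NormedRing (Matrix n n ℂ) := Matrix.linftyOpNormedRing
  letI : NormedAlgebra ℂ (Matrix n n ℂ) := Matrix.linftyOpNormedAlgebra
  letI : CompleteSpace (Matrix n n ℂ) := FiniteDimensional.complete ℂ _
  set LC : Matrix n n ℂ := L.map (Complex.ofReal : ℝ → ℂ) with hLC
  have hsr : spectralRadius ℂ LC < 1 := h
  obtain ⟨r, hr1, hr2⟩ := ENNReal.lt_iff_exists_nnreal_btwn.mp hsr
  have htd := spectrum.pow_nnnorm_pow_one_div_tendsto_nhds_spectralRadius LC
  have hev : ∀ᶠ t : ℕ in atTop, (‖LC ^ t‖₊ : ℝ≥0∞) ^ (1/(t:ℝ)) < (r : ℝ≥0∞) :=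
    htd.eventually_lt_const hr1
  obtain ⟨N, hN⟩ := eventually_atTop.mp hev
  have hmap : ∀ t : ℕ, LC ^ t = (L ^ t).map (Complex.ofReal : ℝ → ℂ) := by
    intro t
    have : LC = Complex.ofRealHom.mapMatrix L := rfl
    rw [this, ← map_pow]
    rfl
  have hentry : ∀ (M : Matrix n n ℂ) (i j : n), ‖M i j‖₊ ≤ ‖M‖₊ := by
    intro M i j
    rw [Matrix.linfty_opNNNorm_def]
    calc ‖M i j‖₊ ≤ ∑ j' : n, ‖M i j'‖₊ :=
          Finset.single_le_sum (f := fun j' => ‖M i j'‖₊) (fun j' _ => zero_le)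
            (Finset.mem_univ j)
      _ ≤ _ := Finset.le_sup (f := fun i => ∑ j' : n, ‖M i j'‖₊) (Finset.mem_univ i)
  have hbound : ∀ t : ℕ, N + 1 ≤ t → ‖LC ^ t‖₊ ≤ r ^ t := by
    intro t ht
    have h0 : (t : ℝ) ≠ 0 := Nat.cast_ne_zero.mpr (by omega)
    have h1 := (hN t (by omega)).le
    have h2 : ((‖LC ^ t‖₊ : ℝ≥0∞) ^ (1/(t:ℝ))) ^ (t:ℝ) ≤ (r : ℝ≥0∞) ^ (t:ℝ) :=
      ENNReal.rpow_le_rpow h1 (by positivity)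
    rw [← ENNReal.rpow_mul, one_div, inv_mul_cancel₀ h0, ENNReal.rpow_one,
      ENNReal.rpow_natCast] at h2
    exact_mod_cast h2
  set ρ : ℝ := max (r : ℝ) (1/2) with hρ
  have hρpos : 0 < ρ := lt_max_of_lt_right (by norm_num)
  have hρ1 : ρ < 1 := by
    apply max_lt _ (by norm_num)
    exact_mod_cast hr2
  have hrρ : (r : ℝ) ≤ ρ := le_max_left _ _
  set c : ℝ := 1 + ∑ t ∈ Finset.range (N + 1), (‖LC ^ t‖ / ρ ^ t) with hc
  have hterm : ∀ t, 0 ≤ ‖LC ^ t‖ / ρ ^ t := fun t => by positivity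
  have hc1 : (1:ℝ) ≤ c := by
    rw [hc]
    have : 0 ≤ ∑ t ∈ Finset.range (N + 1), (‖LC ^ t‖ / ρ ^ t) :=
      Finset.sum_nonneg fun t _ => hterm t
    linarith
  refine ⟨c, ρ, by linarith, hρpos, hρ1, ?_⟩
  intro t i j
  have habs : |(L ^ t) i j| ≤ ‖LC ^ t‖ := by
    have h3 := hentry (LC ^ t) i j
    have h4 : ‖(LC ^ t) i j‖₊ = ‖(L ^ t) i j‖₊ := by
      rw [hmap t]
      simp [Matrix.map_apply]
    rw [h4] at h3
    have h5 : ‖(L ^ t) i j‖ ≤ ‖LC ^ t‖ := by exact_mod_cast h3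
    simpa [Real.norm_eq_abs] using h5
  rcases le_or_gt (N + 1) t with hcase | hcase
  · have h6 : ‖LC ^ t‖ ≤ (r : ℝ) ^ t := by exact_mod_cast hbound t hcase
    calc |(L ^ t) i j| ≤ (r : ℝ) ^ t := habs.trans h6
      _ ≤ ρ ^ t := pow_le_pow_left₀ r.2 hrρ t
      _ ≤ c * ρ ^ t := le_mul_of_one_le_left (by positivity) hc1
  · have h7 : ‖LC ^ t‖ / ρ ^ t ≤ c := by
      rw [hc]
      have := Finset.single_le_sum (fun t' (_ : t' ∈ Finset.range (N+1)) => hterm t')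
        (Finset.mem_range.mpr hcase)
      linarith
    calc |(L ^ t) i j| ≤ ‖LC ^ t‖ := habs
      _ = (‖LC ^ t‖ / ρ ^ t) * ρ ^ t := by field_simp
      _ ≤ c * ρ ^ t := by
          apply mul_le_mul_of_nonneg_right h7 (by positivity)

lemma exists_lyap {L X : Matrix n n ℝ} (h : specRad L < 1) (hX : X.PosSemidef) :
    ∃ S : Matrix n n ℝ, S.PosSemidef ∧ (S - X).PosSemidef ∧ X = S - L * S * Lᵀ := by
  obtain ⟨c, ρ, hc, hρ0, hρ1, hb⟩ := pow_entry_bound h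
  set f : ℕ → Matrix n n ℝ := fun t => L ^ t * X * (Lᵀ) ^ t with hf
  have hfpsd : ∀ t, (f t).PosSemidef := by
    intro t
    have := hX.mul_mul_conjTranspose_same (L ^ t)
    rwa [ctr, transpose_pow] at this
  have hfb : ∀ (t : ℕ) (i j : n),
      |f t i j| ≤ (c ^ 2 * ∑ b : n, ∑ a : n, |X a b|) * (ρ ^ 2) ^ t := by
    intro t i j
    have hft : f t i j = ∑ b : n, ∑ a : n, (L ^ t) i a * X a b * (L ^ t) j b := by
      show (L ^ t * X * Lᵀ ^ t) i j = _
      rw [← transpose_pow]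
      simp only [Matrix.mul_apply, transpose_apply, Finset.sum_mul]
    rw [hft]
    calc |∑ b : n, ∑ a : n, (L ^ t) i a * X a b * (L ^ t) j b|
        ≤ ∑ b : n, ∑ a : n, |(L ^ t) i a * X a b * (L ^ t) j b| := by
          refine (Finset.abs_sum_le_sum_abs _ _).trans ?_
          exact Finset.sum_le_sum fun b _ => Finset.abs_sum_le_sum_abs _ _
      _ ≤ ∑ b : n, ∑ a : n, (c ^ 2 * (ρ ^ 2) ^ t) * |X a b| := by
          refine Finset.sum_le_sum fun b _ => Finset.sum_le_sum fun a _ => ?_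
          rw [abs_mul, abs_mul]
          have h1 := hb t i a
          have h2 := hb t j b
          have h3 : (0:ℝ) ≤ |(L ^ t) i a| := abs_nonneg _
          have h4 : (0:ℝ) ≤ |(L ^ t) j b| := abs_nonneg _
          have h5 : (0:ℝ) ≤ |X a b| := abs_nonneg _
          have hρt : (0:ℝ) ≤ ρ ^ t := by positivity
          have key : (ρ ^ 2) ^ t = ρ ^ t * ρ ^ t := by ring
          rw [key]
          have h6 : |(L ^ t) i a| * |(L ^ t) j b| ≤ (c * ρ ^ t) * (c * ρ ^ t) :=
            mul_le_mul h1 h2 h4 (by positivity)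
          calc |(L ^ t) i a| * |X a b| * |(L ^ t) j b|
              = (|(L ^ t) i a| * |(L ^ t) j b|) * |X a b| := by ring
            _ ≤ ((c * ρ ^ t) * (c * ρ ^ t)) * |X a b| := mul_le_mul_of_nonneg_right h6 h5
            _ = c ^ 2 * (ρ ^ t * ρ ^ t) * |X a b| := by ring
      _ = (c ^ 2 * ∑ b : n, ∑ a : n, |X a b|) * (ρ ^ 2) ^ t := by
          simp only [Finset.sum_mul, Finset.mul_sum]
          refine Finset.sum_congr rfl fun b _ => Finset.sum_congr rfl fun a _ => by ring
  have hsum : ∀ i j, Summable fun t => f t i j := by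
    intro i j
    have hgeo : Summable fun t : ℕ => (c ^ 2 * ∑ b : n, ∑ a : n, |X a b|) * (ρ ^ 2) ^ t :=
      (summable_geometric_of_lt_one (by positivity) (by nlinarith)).mul_left _
    refine Summable.of_abs (hgeo.of_nonneg_of_le (fun t => abs_nonneg _) (fun t => hfb t i j))
  set S : Matrix n n ℝ := Matrix.of fun i j => ∑' t, f t i j with hS
  have hHasSum : HasSum f S := by
    refine Pi.hasSum.mpr ?_
    refine fun i => Pi.hasSum.mpr fun j => (hsum i j).hasSum
  have hfs : ∀ t, f (t + 1) = L * f t * Lᵀ := by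
    intro t
    show L ^ (t + 1) * X * Lᵀ ^ (t + 1) = L * (L ^ t * X * Lᵀ ^ t) * Lᵀ
    rw [pow_succ' L, pow_succ Lᵀ]
    noncomm_ring
  have hf0 : f 0 = X := by simp [hf]
  have hcont : Continuous fun M : Matrix n n ℝ => L * M * Lᵀ :=
    (continuous_const.matrix_mul continuous_id).matrix_mul continuous_const
  have hmapSum : HasSum (fun t => f (t + 1)) (L * S * Lᵀ) := by
    have hg : HasSum (fun t => L * f t * Lᵀ) (L * S * Lᵀ) := by
      have := hHasSum.map (AddMonoidHom.mk' (fun M : Matrix n n ℝ => L * M * Lᵀ)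
        (fun a b => by noncomm_ring)) hcont
      exact this
    simpa [hfs] using hg
  have hshift : HasSum (fun t => f (t + 1)) (S - f 0) := by
    refine (hasSum_nat_add_iff 1).mpr ?_
    simpa [Finset.sum_range_one, sub_add_cancel] using hHasSum
  have hid : L * S * Lᵀ = S - X := by
    rw [← hf0]; exact hmapSum.unique hshift
  have hSherm : S.IsHermitian := by
    ext i j
    simp only [conjTranspose_apply, star_trivial]
    show (∑' t, f t j i) = ∑' t, f t i j
    refine tsum_congr fun t => ?_
    have := (hfpsd t).1
    calc f t j i = (f t)ᴴ i j := by simp [conjTranspose_apply]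
      _ = f t i j := by rw [this]
  have hquad : ∀ x : n → ℝ, 0 ≤ x ⬝ᵥ (S *ᵥ x) := by
    intro x
    have hφcont : Continuous fun M : Matrix n n ℝ => x ⬝ᵥ (M *ᵥ x) := by
      simp only [dotProduct, Matrix.mulVec]
      fun_prop
    have hφ := hHasSum.map (AddMonoidHom.mk' (fun M : Matrix n n ℝ => x ⬝ᵥ (M *ᵥ x))
      (fun a b => by simp [add_mulVec, dotProduct_add])) hφcont
    refine hasSum_le (fun t => ?_) hasSum_zero hφ
    simpa using (hfpsd t).dotProduct_mulVec_nonneg x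
  have hSpsd : S.PosSemidef := .of_dotProduct_mulVec_nonneg hSherm fun x => by simpa using hquad x
  refine ⟨S, hSpsd, ?_, by rw [hid, sub_sub_cancel]⟩
  have : S - X = L * S * Lᵀ := hid.symm
  rw [this, ← ctr]
  exact hSpsd.mul_mul_conjTranspose_same L

end LQRAux

end Auxiliary

open LQRAux in
set_option maxHeartbeats 2000000 in
/-- monotonicity along exact natural gradient: if `K` is stabilizing,
`γ (‖R‖ + σ_min(Ψ)⁻¹ ‖B‖² J(K)) ≤ 1` and `K' = K − γ E_K`, then
`J(K') − J(K) ≤ −γ σ_min(Ψ) tr(E_Kᵀ E_K) ≤ 0`; in particular `J(K') ≤ J(K)`,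
where `J(K) = tr(P_K Ψ_σ) + σ² tr(R)`. -/
theorem lqr_natural_gradient_monotone
    (d k : ℕ) (A : Matrix (Fin d) (Fin d) ℝ) (B : Matrix (Fin d) (Fin k) ℝ)
    (K K' : Matrix (Fin k) (Fin d) ℝ) (σ γ : ℝ)
    (Q Ψ Ψσ PK PK' : Matrix (Fin d) (Fin d) ℝ) (R : Matrix (Fin k) (Fin k) ℝ)
    (hΨσ : Ψσ = Ψ + σ ^ 2 • (B * Bᵀ))
    (hQ : Q.PosDef) (hR : R.PosDef) (hΨ : Ψ.PosDef)
    (EK : Matrix (Fin k) (Fin d) ℝ)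
    (hEK : EK = (R + Bᵀ * PK * B) * K - Bᵀ * PK * A)
    (hγpos : 0 < γ)
    (hγ : γ * (opNorm R + (minEig Ψ)⁻¹ * opNorm B ^ 2 *
      ((PK * Ψσ).trace + σ ^ 2 * R.trace)) ≤ 1)
    (hK' : K' = K - γ • EK)
    (hstab : specRad (A - B * K) < 1) (hstab' : specRad (A - B * K') < 1)
    (hPKpd : PK.PosDef) (hPK : PK = Q + Kᵀ * R * K + (A - B * K)ᵀ * PK * (A - B * K))
    (hPK'pd : PK'.PosDef)
    (hPK' : PK' = Q + K'ᵀ * R * K' + (A - B * K')ᵀ * PK' * (A - B * K')) :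
    ((PK' * Ψσ).trace + σ ^ 2 * R.trace) - ((PK * Ψσ).trace + σ ^ 2 * R.trace) ≤
        -γ * minEig Ψ * (EKᵀ * EK).trace ∧
      -γ * minEig Ψ * (EKᵀ * EK).trace ≤ 0 ∧
      (PK' * Ψσ).trace + σ ^ 2 * R.trace ≤ (PK * Ψσ).trace + σ ^ 2 * R.trace := by
  rcases Nat.eq_zero_or_pos d with hd | hd
  · subst hd
    have htr0 : ∀ M : Matrix (Fin 0) (Fin 0) ℝ, M.trace = 0 := fun M => by
      simp [Matrix.trace]
    refine ⟨?_, ?_, ?_⟩ <;> simp [htr0]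
  · haveI : Nonempty (Fin d) := ⟨⟨0, hd⟩⟩
    have hPsym : PKᵀ = PK := by rw [← ctr]; exact hPKpd.1
    have hRsym : Rᵀ = R := by rw [← ctr]; exact hR.1
    have hc : 0 < minEig Ψ := minEig_pos hΨ
    have hΨc : (Ψ - minEig Ψ • 1).PosSemidef := psd_sub_minEig_smul hΨ
    have hBBt : (σ ^ 2 • (B * Bᵀ)).PosSemidef := by
      have he : σ ^ 2 • (B * Bᵀ) = (σ • B) * (σ • B)ᵀ := by
        rw [transpose_smul, Matrix.smul_mul, Matrix.mul_smul, smul_smul, ← sq]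
      rw [he, ← ctr]
      exact posSemidef_self_mul_conjTranspose _
    have hΨσpsd : Ψσ.PosSemidef := by rw [hΨσ]; exact hΨ.posSemidef.add hBBt
    have hEE : (EKᵀ * EK).PosSemidef := by
      have := posSemidef_conjTranspose_mul_self EK
      rwa [ctr] at this
    have htrEE : 0 ≤ (EKᵀ * EK).trace := psd_trace_nonneg hEE
    have htrR : 0 ≤ R.trace := psd_trace_nonneg hR.posSemidef
    have htrPK : 0 ≤ PK.trace := psd_trace_nonneg hPKpd.posSemidef
    have h1 : minEig Ψ * PK.trace ≤ (PK * Ψ).trace := trace_mul_ge hPKpd.posSemidef hΨc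
    have h2 : (PK * Ψ).trace ≤ (PK * Ψσ).trace := by
      have h := trace_mul_psd_nonneg hPKpd.posSemidef hBBt
      have he : PK * Ψσ = PK * Ψ + PK * (σ ^ 2 • (B * Bᵀ)) := by rw [hΨσ, Matrix.mul_add]
      rw [he, trace_add]; linarith
    have hσR : 0 ≤ σ ^ 2 * R.trace := by positivity
    have hJ : minEig Ψ * PK.trace ≤ (PK * Ψσ).trace + σ ^ 2 * R.trace := by linarith
    have hPKJ : PK.trace ≤ (minEig Ψ)⁻¹ * ((PK * Ψσ).trace + σ ^ 2 * R.trace) := by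
      rw [le_inv_mul_iff₀ hc]
      exact hJ
    have hB2 : (0:ℝ) ≤ opNorm B ^ 2 := by positivity
    have hγkey : γ * (opNorm R + PK.trace * opNorm B ^ 2) ≤ 1 := by
      have h3 : PK.trace * opNorm B ^ 2
          ≤ (minEig Ψ)⁻¹ * opNorm B ^ 2 * ((PK * Ψσ).trace + σ ^ 2 * R.trace) := by
        calc PK.trace * opNorm B ^ 2
            ≤ ((minEig Ψ)⁻¹ * ((PK * Ψσ).trace + σ ^ 2 * R.trace)) * opNorm B ^ 2 :=
              mul_le_mul_of_nonneg_right hPKJ hB2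
          _ = (minEig Ψ)⁻¹ * opNorm B ^ 2 * ((PK * Ψσ).trace + σ ^ 2 * R.trace) := by ring
      calc γ * (opNorm R + PK.trace * opNorm B ^ 2)
          ≤ γ * (opNorm R + (minEig Ψ)⁻¹ * opNorm B ^ 2 *
              ((PK * Ψσ).trace + σ ^ 2 * R.trace)) := by
            apply mul_le_mul_of_nonneg_left _ hγpos.le
            linarith
        _ ≤ 1 := hγ
    -- the PSD matrix N = γ•EᵀE − γ²•Eᵀ(R+BᵀPB)E
    have hNherm : (γ • (EKᵀ * EK) - γ ^ 2 • (EKᵀ * (R + Bᵀ * PK * B) * EK)).IsHermitian := by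
      show _ᴴ = _
      rw [ctr]
      simp only [transpose_sub, transpose_smul, transpose_mul, transpose_add,
        transpose_transpose, hPsym, hRsym, Matrix.mul_assoc]
    have hNquad : ∀ x : Fin d → ℝ,
        0 ≤ x ⬝ᵥ ((γ • (EKᵀ * EK) - γ ^ 2 • (EKᵀ * (R + Bᵀ * PK * B) * EK)) *ᵥ x) := by
      intro x
      set y := EK *ᵥ x with hy
      have e1 : x ⬝ᵥ ((EKᵀ * EK) *ᵥ x) = y ⬝ᵥ y := by
        rw [← mulVec_mulVec, dotProduct_mulVec, vecMul_transpose, hy]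
      have e2 : x ⬝ᵥ ((EKᵀ * (R + Bᵀ * PK * B) * EK) *ᵥ x)
          = y ⬝ᵥ ((R + Bᵀ * PK * B) *ᵥ y) := by
        rw [← mulVec_mulVec, ← mulVec_mulVec, dotProduct_mulVec, vecMul_transpose, hy]
      have hq : 0 ≤ y ⬝ᵥ y := dot_self_nonneg y
      have hsplit : y ⬝ᵥ ((R + Bᵀ * PK * B) *ᵥ y)
          = y ⬝ᵥ (R *ᵥ y) + (B *ᵥ y) ⬝ᵥ (PK *ᵥ (B *ᵥ y)) := by
        rw [add_mulVec, dotProduct_add]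
        congr 1
        rw [← mulVec_mulVec, ← mulVec_mulVec, dotProduct_mulVec, vecMul_transpose]
      have hw1 : y ⬝ᵥ (R *ᵥ y) ≤ opNorm R * (y ⬝ᵥ y) := quad_le_opNorm R y
      have hw2 : (B *ᵥ y) ⬝ᵥ (PK *ᵥ (B *ᵥ y)) ≤ PK.trace * (opNorm B ^ 2 * (y ⬝ᵥ y)) := by
        calc (B *ᵥ y) ⬝ᵥ (PK *ᵥ (B *ᵥ y)) ≤ PK.trace * ((B *ᵥ y) ⬝ᵥ (B *ᵥ y)) :=
              quad_le_trace hPKpd.posSemidef _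
          _ ≤ PK.trace * (opNorm B ^ 2 * (y ⬝ᵥ y)) :=
              mul_le_mul_of_nonneg_left (norm_mulVec_le B y) htrPK
      have hw : y ⬝ᵥ ((R + Bᵀ * PK * B) *ᵥ y)
          ≤ (opNorm R + PK.trace * opNorm B ^ 2) * (y ⬝ᵥ y) := by
        have he : (opNorm R + PK.trace * opNorm B ^ 2) * (y ⬝ᵥ y)
            = opNorm R * (y ⬝ᵥ y) + PK.trace * (opNorm B ^ 2 * (y ⬝ᵥ y)) := by ring
        rw [hsplit, he]
        linarith
      have egoal : x ⬝ᵥ ((γ • (EKᵀ * EK) - γ ^ 2 • (EKᵀ * (R + Bᵀ * PK * B) * EK)) *ᵥ x)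
          = γ * (y ⬝ᵥ y) - γ ^ 2 * (y ⬝ᵥ ((R + Bᵀ * PK * B) *ᵥ y)) := by
        rw [sub_mulVec, smul_mulVec, smul_mulVec, dotProduct_sub,
          dotProduct_smul, dotProduct_smul, smul_eq_mul, smul_eq_mul, e1, e2]
      rw [egoal]
      have h6 : γ * (opNorm R + PK.trace * opNorm B ^ 2) * (γ * (y ⬝ᵥ y))
          ≤ 1 * (γ * (y ⬝ᵥ y)) :=
        mul_le_mul_of_nonneg_right hγkey (by positivity)
      nlinarith [mul_le_mul_of_nonneg_left hw (sq_nonneg γ), h6]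
    have hNpsd : (γ • (EKᵀ * EK) - γ ^ 2 • (EKᵀ * (R + Bᵀ * PK * B) * EK)).PosSemidef :=
      .of_dotProduct_mulVec_nonneg hNherm fun x => by simpa using hNquad x
    -- Lyapunov solution for the closed loop K'
    obtain ⟨S, hSpsd, hSX, hXid⟩ := exists_lyap hstab' hΨσpsd
    have hSc : (S - minEig Ψ • 1).PosSemidef := by
      have he : S - minEig Ψ • 1 = (S - Ψσ) + σ ^ 2 • (B * Bᵀ) + (Ψ - minEig Ψ • 1) := by
        rw [hΨσ]; abel
      rw [he]
      exact (hSX.add hBBt).add hΨc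
    -- algebraic completion-of-squares identity
    have claim0 : Q + K'ᵀ * R * K' + (A - B * K')ᵀ * PK * (A - B * K')
        = (Q + Kᵀ * R * K + (A - B * K)ᵀ * PK * (A - B * K))
          + ((K' - K)ᵀ * (R + Bᵀ * PK * B) * (K' - K)
            + (K' - K)ᵀ * ((R + Bᵀ * PK * B) * K - Bᵀ * PK * A)
            + ((R + Bᵀ * PK * B) * K - Bᵀ * PK * A)ᵀ * (K' - K)) := by
      simp only [transpose_sub, transpose_add, transpose_mul, transpose_transpose, hPsym, hRsym,
        Matrix.sub_mul, Matrix.mul_sub, Matrix.add_mul, Matrix.mul_add, Matrix.mul_assoc]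
      abel
    have claim1 : Q + K'ᵀ * R * K' + (A - B * K')ᵀ * PK * (A - B * K')
        = PK + ((K' - K)ᵀ * (R + Bᵀ * PK * B) * (K' - K)
            + (K' - K)ᵀ * EK + EKᵀ * (K' - K)) := by
      rw [claim0, ← hPK, ← hEK]
    have hDeq : (K' - K)ᵀ * (R + Bᵀ * PK * B) * (K' - K) + (K' - K)ᵀ * EK + EKᵀ * (K' - K)
        = (Q + K'ᵀ * R * K' + (A - B * K')ᵀ * PK * (A - B * K')) - PK := by
      rw [claim1]; abel
    have claim2 : PK' - PK = (A - B * K')ᵀ * (PK' - PK) * (A - B * K')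
        + ((K' - K)ᵀ * (R + Bᵀ * PK * B) * (K' - K) + (K' - K)ᵀ * EK + EKᵀ * (K' - K)) := by
      rw [hDeq]
      conv_lhs => rw [hPK']
      noncomm_ring
    have e5 : (PK' - PK) - (A - B * K')ᵀ * (PK' - PK) * (A - B * K')
        = (K' - K)ᵀ * (R + Bᵀ * PK * B) * (K' - K) + (K' - K)ᵀ * EK + EKᵀ * (K' - K) :=
      sub_eq_of_eq_add' claim2
    -- trace identity moving Ψσ to S
    have htr1 : ((PK' - PK) * Ψσ).trace
        = (((K' - K)ᵀ * (R + Bᵀ * PK * B) * (K' - K)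
            + (K' - K)ᵀ * EK + EKᵀ * (K' - K)) * S).trace := by
      rw [hXid, Matrix.mul_sub, trace_sub]
      have e3 : (PK' - PK) * ((A - B * K') * S * (A - B * K')ᵀ)
          = ((PK' - PK) * (A - B * K') * S) * (A - B * K')ᵀ := by noncomm_ring
      rw [e3, trace_mul_comm ((PK' - PK) * (A - B * K') * S) ((A - B * K')ᵀ)]
      have e4 : (A - B * K')ᵀ * ((PK' - PK) * (A - B * K') * S)
          = ((A - B * K')ᵀ * (PK' - PK) * (A - B * K')) * S := by noncomm_ring
      rw [e4, ← trace_sub, ← Matrix.sub_mul, e5]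
    -- rewrite D in terms of N
    have hΔ : K' - K = -(γ • EK) := by rw [hK']; abel
    have hDS : (K' - K)ᵀ * (R + Bᵀ * PK * B) * (K' - K) + (K' - K)ᵀ * EK + EKᵀ * (K' - K)
        = -((γ • (EKᵀ * EK) - γ ^ 2 • (EKᵀ * (R + Bᵀ * PK * B) * EK)) + γ • (EKᵀ * EK)) := by
      have t1 : (-(γ • EK))ᵀ * (R + Bᵀ * PK * B) * (-(γ • EK))
          = γ ^ 2 • (EKᵀ * (R + Bᵀ * PK * B) * EK) := by
        simp only [transpose_neg, transpose_smul, Matrix.neg_mul, Matrix.mul_neg, smul_neg,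
          neg_neg, Matrix.smul_mul, Matrix.mul_smul, smul_smul]
        rw [← pow_two]
      have t2 : (-(γ • EK))ᵀ * EK = -(γ • (EKᵀ * EK)) := by
        simp only [transpose_neg, transpose_smul, Matrix.neg_mul, Matrix.smul_mul]
      have t3 : EKᵀ * (-(γ • EK)) = -(γ • (EKᵀ * EK)) := by
        simp only [Matrix.mul_neg, Matrix.mul_smul]
      rw [hΔ, t1, t2, t3]
      abel
    -- trace bound
    have htrD : ((-((γ • (EKᵀ * EK) - γ ^ 2 • (EKᵀ * (R + Bᵀ * PK * B) * EK))
          + γ • (EKᵀ * EK))) * S).trace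
        ≤ -γ * minEig Ψ * (EKᵀ * EK).trace := by
      have hNS : 0 ≤ ((γ • (EKᵀ * EK) - γ ^ 2 • (EKᵀ * (R + Bᵀ * PK * B) * EK)) * S).trace :=
        trace_mul_psd_nonneg hNpsd hSpsd
      have hES : minEig Ψ * (EKᵀ * EK).trace ≤ ((EKᵀ * EK) * S).trace := trace_mul_ge hEE hSc
      have hexp : (-((γ • (EKᵀ * EK) - γ ^ 2 • (EKᵀ * (R + Bᵀ * PK * B) * EK))
            + γ • (EKᵀ * EK))) * S
          = -((γ • (EKᵀ * EK) - γ ^ 2 • (EKᵀ * (R + Bᵀ * PK * B) * EK)) * S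
            + γ • ((EKᵀ * EK) * S)) := by
        rw [Matrix.neg_mul, Matrix.add_mul, Matrix.smul_mul]
      rw [hexp, trace_neg, trace_add, trace_smul, smul_eq_mul]
      have h9 := mul_le_mul_of_nonneg_left hES hγpos.le
      linarith
    have hfin : (PK' * Ψσ).trace - (PK * Ψσ).trace = ((PK' - PK) * Ψσ).trace := by
      rw [Matrix.sub_mul, trace_sub]
    have hpart1 : ((PK' * Ψσ).trace + σ ^ 2 * R.trace) - ((PK * Ψσ).trace + σ ^ 2 * R.trace)
        ≤ -γ * minEig Ψ * (EKᵀ * EK).trace := by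
      have h10 := htr1
      rw [hDS] at h10
      calc ((PK' * Ψσ).trace + σ ^ 2 * R.trace) - ((PK * Ψσ).trace + σ ^ 2 * R.trace)
          = ((PK' - PK) * Ψσ).trace := by rw [← hfin]; ring
        _ = _ := h10
        _ ≤ _ := htrD
    have hpart2 : -γ * minEig Ψ * (EKᵀ * EK).trace ≤ 0 := by
      have h8 : 0 ≤ γ * minEig Ψ * (EKᵀ * EK).trace :=
        mul_nonneg (mul_nonneg hγpos.le hc.le) htrEE
      linarith
    exact ⟨hpart1, hpart2, by linarith⟩
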